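/- Let P be a partition of a positive integer n, let b_1 < b_2 < … < b_r be positive integers with b_{i+1} ≥ b_i + 2 for 1 ≤ i < r, let u ∈ {1, …, r−1}, and let a be a positive integer with b_u + 2 ≤ a and b_{u+1} = a + 1. Then the sequence b_1, …, b_u, a, b_{u+2}, …, b_r defines an r-U-chain in D_P and, as integers, |U_{b_1,…,b_u,a,b_{u+2},…,b_r}| − |U_{b_1,…,b_r}| = (a − 2u)·(n_a − n_{a+2}). -/

import Mathlib

/-!
Common definitions for the poset `D_P` attached to a partition `P` of `n`,
its `U`-chains, the quantity `s(P,a)` (cardinality of a simple `U`-chain),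
and `U`-processes, following Khatami, "The poset of the nilpotent commutator
of a nilpotent matrix".

A partition of `n` is encoded by its multiplicity function `np : ℕ →₀ ℕ`
(`np p` = number of parts equal to `p`), with `np 0 = 0` and `Σ p·np p = n`.
-/

/-- Vertices are triples `(u, p, k)`. -/
abbrev Vtx : Type := ℕ × ℕ × ℕ

/-- `np` is the multiplicity function of a partition of `n`. -/
def IsPartitionOf (n : ℕ) (np : ℕ →₀ ℕ) : Prop :=
  np 0 = 0 ∧ (np.sum fun p m => p * m) = n

/-- The vertex set of the diagram `D_P`: triples `(u,p,k)` with
`1 ≤ u ≤ p` and `1 ≤ k ≤ np p`. -/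
def vertexSet (np : ℕ →₀ ℕ) : Set Vtx :=
  {v | 1 ≤ v.1 ∧ v.1 ≤ v.2.1 ∧ 1 ≤ v.2.2 ∧ v.2.2 ≤ np v.2.1}

/-- The set `S_i` for the value `a`:
`S_i = {(u,p,k) : p ∈ {a, a+1}, i ≤ u ≤ p−i+1} ∪ {(u,p,k) : p > a+1, u ∈ {i, p−i+1}}`,
a subset of the vertex set of `D_P`.  (The condition `u ≤ p - i + 1` is written
as `u + i ≤ p + 1` to avoid truncated subtraction.) -/
def Sset (np : ℕ →₀ ℕ) (i a : ℕ) : Set Vtx :=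
  {v ∈ vertexSet np |
    ((v.2.1 = a ∨ v.2.1 = a + 1) ∧ i ≤ v.1 ∧ v.1 + i ≤ v.2.1 + 1) ∨
    (a + 1 < v.2.1 ∧ (v.1 = i ∨ v.1 + i = v.2.1 + 1))}

/-- The `r`-`U`-chain `U_{b 1, …, b r} = S_1 ∪ ⋯ ∪ S_r` in `D_P`. -/
def UChain (np : ℕ →₀ ℕ) (b : ℕ → ℕ) (r : ℕ) : Set Vtx :=
  ⋃ i ∈ Set.Icc 1 r, Sset np i (b i)

/-- `b 1 < b 2 < ⋯ < b r` are positive with consecutive differences at least `2`. -/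
def ValidSeq (b : ℕ → ℕ) (r : ℕ) : Prop :=
  (∀ i, 1 ≤ i → i ≤ r → 1 ≤ b i) ∧ ∀ i, 1 ≤ i → i < r → b i + 2 ≤ b (i + 1)

/-- `s(P,a) = a·n_a + (a+1)·n_{a+1} + 2·Σ_{p>a+1} n_p`, the cardinality of the
simple `U`-chain `U_a` in `D_P`. -/
def sVal (np : ℕ →₀ ℕ) (a : ℕ) : ℕ :=
  a * np a + (a + 1) * np (a + 1) +
    2 * ∑ p ∈ np.support.filter (fun p => a + 1 < p), np p

/-- `a` is optimal for `P`: `U_a` is a maximum simple `U`-chain in `D_P`. -/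
def OptimalFor (np : ℕ →₀ ℕ) (a : ℕ) : Prop :=
  1 ≤ a ∧ ∀ c, 1 ≤ c → sVal np c ≤ sVal np a

/-- `p` is a part of the partition with multiplicity function `np`. -/
def IsPart (np : ℕ →₀ ℕ) (p : ℕ) : Prop := 0 < p ∧ 0 < np p

/-- The covering relation of the poset `D_P`:  `Cov np x y` means `y` covers `x`.
(i)  for consecutive parts `q < p` and `1 ≤ u ≤ q`, `(u, p, np p)` is covered by `(u, q, 1)`;
(ii) for consecutive parts `p < q` and `1 ≤ u ≤ p`, `(u, p, np p)` is covered by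
     `(u + q − p, q, 1)`;
(iii) for a part `p`, `1 ≤ u ≤ p`, `1 ≤ k < np p`, `(u,p,k)` is covered by `(u,p,k+1)`;
(iv) for an isolated part `p` (neither `p−1` nor `p+1` is a part) and `1 ≤ u < p`,
     `(u, p, np p)` is covered by `(u+1, p, 1)`. -/
def Cov (np : ℕ →₀ ℕ) (x y : Vtx) : Prop :=
  (∃ p q u, IsPart np p ∧ IsPart np q ∧ q < p ∧
      (∀ t, q < t → t < p → ¬ IsPart np t) ∧
      1 ≤ u ∧ u ≤ q ∧ x = (u, p, np p) ∧ y = (u, q, 1)) ∨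
  (∃ p q u, IsPart np p ∧ IsPart np q ∧ p < q ∧
      (∀ t, p < t → t < q → ¬ IsPart np t) ∧
      1 ≤ u ∧ u ≤ p ∧ x = (u, p, np p) ∧ y = (u + (q - p), q, 1)) ∨
  (∃ p u k, IsPart np p ∧ 1 ≤ u ∧ u ≤ p ∧ 1 ≤ k ∧ k < np p ∧
      x = (u, p, k) ∧ y = (u, p, k + 1)) ∨
  (∃ p u, IsPart np p ∧ ¬ IsPart np (p - 1) ∧ ¬ IsPart np (p + 1) ∧
      1 ≤ u ∧ u < p ∧ x = (u, p, np p) ∧ y = (u + 1, p, 1))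

/-- The partial order of `D_P`: reflexive–transitive closure of the covering relation. -/
def leD (np : ℕ →₀ ℕ) : Vtx → Vtx → Prop := Relation.ReflTransGen (Cov np)

/-- A chain in `D_P`: a subset of the vertex set that is totally ordered by `leD`. -/
def IsChainD (np : ℕ →₀ ℕ) (C : Set Vtx) : Prop :=
  C ⊆ vertexSet np ∧ ∀ x ∈ C, ∀ y ∈ C, leD np x y ∨ leD np y x

/-- `u_r(P)`: the maximum cardinality of an `r`-`U`-chain in `D_P`. -/
noncomputable def uMax (np : ℕ →₀ ℕ) (r : ℕ) : ℕ :=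
  sSup {m | ∃ b : ℕ → ℕ, ValidSeq b r ∧ (UChain np b r).ncard = m}

/-- The relabeling injection `ι : D_{P'} → D_P` attached to removing `U_a`. -/
def iotaMap (a : ℕ) (v : Vtx) : Vtx :=
  if v.2.1 < a then v else (v.1 + 1, v.2.1 + 2, v.2.2)

/-- `iotaComp aa i = ι_1 ∘ ⋯ ∘ ι_i`, where `ι_j` is the relabeling map for `aa j`. -/
def iotaComp (aa : ℕ → ℕ) : ℕ → Vtx → Vtx
  | 0 => id
  | i + 1 => iotaComp aa i ∘ iotaMap (aa (i + 1))

/-- `(P_1, …, P_{r+1}; a_1, …, a_r)` is a `U`-process of length `r` for `P`: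
`P_1 = P`, each `a_i` is optimal for `P_i`, and `P_{i+1}` is obtained from `P_i`
by deleting the parts equal to `a_i` or `a_i + 1` and decreasing by `2` every
part greater than `a_i + 1`. -/
def IsUProcess (r : ℕ) (np : ℕ →₀ ℕ) (Ps : ℕ → ℕ →₀ ℕ) (aa : ℕ → ℕ) : Prop :=
  Ps 1 = np ∧
    ∀ i, 1 ≤ i → i ≤ r →
      OptimalFor (Ps i) (aa i) ∧
        ∀ m, Ps (i + 1) m = if m < aa i then Ps i m else Ps i (m + 2)

/-- The subset `C_i = (ι_1 ∘ ⋯ ∘ ι_{i−1})(U_{a_i}) ⊆ D_P` of a `U`-process. -/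
def Cset (Ps : ℕ → ℕ →₀ ℕ) (aa : ℕ → ℕ) (i : ℕ) : Set Vtx :=
  iotaComp aa (i - 1) '' Sset (Ps i) 1 (aa i)

def uSet (i c p : ℕ) : Finset ℕ :=
  if p = c ∨ p = c + 1 then Finset.Icc i (p + 1 - i)
  else if c + 1 < p then {i, p + 1 - i} else ∅

def Fset (np : ℕ →₀ ℕ) (i c : ℕ) : Finset Vtx :=
  np.support.biUnion fun p => uSet i c p ×ˢ ({p} ×ˢ Finset.Icc 1 (np p))

lemma mem_Fset (np : ℕ →₀ ℕ) {i c : ℕ} (hi : 1 ≤ i) (hc : 2 * i ≤ c + 1)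
    (v : Vtx) : v ∈ Fset np i c ↔ v ∈ Sset np i c := by
  obtain ⟨w, p, k⟩ := v
  simp only [Fset, Finset.mem_biUnion, Finsupp.mem_support_iff, Finset.mem_product,
    Finset.mem_singleton, Finset.mem_Icc, Sset, vertexSet, Set.mem_setOf_eq, uSet]
  constructor
  · rintro ⟨q, hq, hw, rfl, hk⟩
    split_ifs at hw with h1 h2
    · simp only [Finset.mem_Icc] at hw
      refine ⟨⟨by omega, by omega, hk.1, hk.2⟩, ?_⟩
      omega
    · simp only [Finset.mem_insert, Finset.mem_singleton] at hw
      refine ⟨⟨by omega, by omega, hk.1, hk.2⟩, ?_⟩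
      omega
    · simp at hw
  · rintro ⟨⟨h1, h2, h3, h4⟩, h5⟩
    refine ⟨p, by omega, ?_, rfl, h3, h4⟩
    split_ifs with g1 g2
    · simp only [Finset.mem_Icc]; omega
    · simp only [Finset.mem_insert, Finset.mem_singleton]; omega
    · omega

lemma card_uSet {i c : ℕ} (hi : 1 ≤ i) (hc : 2 * i ≤ c + 1) (p : ℕ) :
    (uSet i c p).card =
      if p = c then c + 2 - 2 * i
      else if p = c + 1 then c + 3 - 2 * i
      else if c + 1 < p then 2 else 0 := by
  unfold uSet
  rcases eq_or_ne p c with rfl | h1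
  · rw [if_pos (Or.inl rfl), if_pos rfl, Nat.card_Icc]; omega
  rcases eq_or_ne p (c + 1) with rfl | h2
  · rw [if_pos (Or.inr rfl), if_neg (by omega), if_pos rfl, Nat.card_Icc]; omega
  by_cases h3 : c + 1 < p
  · rw [if_neg (by omega), if_pos h3, if_neg h1, if_neg h2, if_pos h3,
      Finset.card_insert_of_notMem (by simp only [Finset.mem_singleton]; omega),
      Finset.card_singleton]
  · rw [if_neg (by omega), if_neg h3, if_neg h1, if_neg h2, if_neg h3, Finset.card_empty]

lemma card_Fset (np : ℕ →₀ ℕ) (i c : ℕ) :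
    (Fset np i c).card = ∑ p ∈ np.support, (uSet i c p).card * np p := by
  unfold Fset
  rw [Finset.card_biUnion]
  · refine Finset.sum_congr rfl fun p _ => ?_
    rw [Finset.card_product, Finset.card_product, Finset.card_singleton, Nat.card_Icc,
      Nat.add_sub_cancel, one_mul]
  · intro p _ q _ hpq
    simp only [Finset.disjoint_left]
    rintro ⟨w, p', k⟩ h1 h2
    simp only [Finset.mem_product, Finset.mem_singleton] at h1 h2
    exact hpq (h1.2.1 ▸ h2.2.1 ▸ rfl)

lemma Fset_diff (np : ℕ →₀ ℕ) {i a : ℕ} (hi : 1 ≤ i) (ha : 2 * i ≤ a + 1) :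
    ((Fset np i a).card : ℤ) - ((Fset np i (a + 1)).card : ℤ)
      = ((a : ℤ) + 2 - 2 * i) * ((np a : ℤ) - (np (a + 2) : ℤ)) := by
  rw [card_Fset, card_Fset]
  push_cast
  rw [← Finset.sum_sub_distrib]
  have key : ∀ p ∈ np.support,
      ((uSet i a p).card : ℤ) * (np p : ℤ) - ((uSet i (a+1) p).card : ℤ) * (np p : ℤ)
      = (if p = a then ((a : ℤ) + 2 - 2 * i) * (np a : ℤ) else 0)
        - (if p = a + 2 then ((a : ℤ) + 2 - 2 * i) * (np (a+2) : ℤ) else 0) := by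
    intro p _
    rw [card_uSet hi ha, card_uSet hi (by omega)]
    rcases eq_or_ne p a with h1 | h1
    · rw [if_pos h1, if_neg (by omega), if_neg (by omega), if_neg (by omega),
        if_pos h1, if_neg (by omega), h1]
      have : ((a + 2 - 2 * i : ℕ) : ℤ) = (a : ℤ) + 2 - 2 * i := by omega
      rw [this]; push_cast; ring
    rcases eq_or_ne p (a + 1) with h2 | h2
    · rw [if_neg (by omega), if_pos h2, if_pos h2, if_neg h1, if_neg (by omega),
        show a + 3 - 2 * i = a + 1 + 2 - 2 * i from by omega]
      ring
    rcases eq_or_ne p (a + 2) with h3 | h3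
    · rw [if_neg h1, if_neg h2, if_pos (show a + 1 < p from by omega), if_neg h2,
        if_pos (show p = a + 1 + 1 from by omega), if_neg h1, if_pos h3, h3]
      have : ((a + 1 + 3 - 2 * i : ℕ) : ℤ) = (a : ℤ) + 4 - 2 * i := by omega
      rw [this]; push_cast; ring
    rcases lt_or_gt_of_ne (show p ≠ a + 2 from h3) with h4 | h4
    · rw [if_neg h1, if_neg h2, if_neg (by omega), if_neg h2, if_neg (by omega),
        if_neg (by omega), if_neg h1, if_neg h3]
      ring
    · rw [if_neg h1, if_neg h2, if_pos (show a + 1 < p from by omega), if_neg h2,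
        if_neg (by omega), if_pos (show a + 1 + 1 < p from by omega), if_neg h1, if_neg h3]
      ring
  rw [Finset.sum_congr rfl key, Finset.sum_sub_distrib,
    Finset.sum_ite_eq' np.support a, Finset.sum_ite_eq' np.support (a + 2)]
  rcases eq_or_ne (np a) 0 with h | h <;> rcases eq_or_ne (np (a+2)) 0 with h' | h'
  all_goals simp [Finsupp.mem_support_iff, h, h'] <;> ring

lemma Sset_disjoint (np : ℕ →₀ ℕ) {i j c d : ℕ} (hi : 1 ≤ i) (hij : i < j)
    (hcd : c + 2 ≤ d) (hd : 2 * j ≤ d + 1) :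
    Disjoint (Sset np i c) (Sset np j d) := by
  rw [Set.disjoint_left]
  rintro ⟨w, p, k⟩ h1 h2
  simp only [Sset, vertexSet, Set.mem_setOf_eq] at h1 h2
  omega

lemma validseq_ge {b : ℕ → ℕ} {r : ℕ} (hb : ValidSeq b r) :
    ∀ j, ∀ i, 1 ≤ i → i ≤ j → j ≤ r → b i + 2 * (j - i) ≤ b j := by
  intro j
  induction j with
  | zero => intro i h1 h2 _; omega
  | succ k ih =>
    intro i h1 h2 h3
    rcases eq_or_lt_of_le h2 with h | h
    · rw [h]; omega
    · have h4 := ih i h1 (by omega) (by omega)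
      have h5 := hb.2 k (by omega) (by omega)
      omega

lemma validseq_lb {b : ℕ → ℕ} {r : ℕ} (hb : ValidSeq b r) {i : ℕ}
    (h1 : 1 ≤ i) (h2 : i ≤ r) : 2 * i ≤ b i + 1 := by
  have := validseq_ge hb i 1 le_rfl h1 h2
  have := hb.1 1 le_rfl (by omega)
  omega

lemma UChain_eq (np : ℕ →₀ ℕ) (b : ℕ → ℕ) (r : ℕ)
    (h : ∀ i, 1 ≤ i → i ≤ r → 2 * i ≤ b i + 1) :
    UChain np b r = ↑((Finset.Icc 1 r).biUnion fun i => Fset np i (b i)) := by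
  ext v
  simp only [UChain, Set.mem_iUnion, Set.mem_Icc, exists_prop, Finset.coe_biUnion,
    Finset.mem_coe, Finset.mem_Icc, Finset.mem_biUnion]
  constructor
  · rintro ⟨i, ⟨hi1, hi2⟩, hv⟩
    exact ⟨i, ⟨hi1, hi2⟩, (mem_Fset np hi1 (h i hi1 hi2) v).2 hv⟩
  · rintro ⟨i, ⟨hi1, hi2⟩, hv⟩
    exact ⟨i, ⟨hi1, hi2⟩, (mem_Fset np hi1 (h i hi1 hi2) v).1 hv⟩

lemma UChain_ncard (np : ℕ →₀ ℕ) (b : ℕ → ℕ) (r : ℕ) (hb : ValidSeq b r)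
    (h : ∀ i, 1 ≤ i → i ≤ r → 2 * i ≤ b i + 1) :
    (UChain np b r).ncard = ∑ i ∈ Finset.Icc 1 r, (Fset np i (b i)).card := by
  rw [UChain_eq np b r h, Set.ncard_coe_finset, Finset.card_biUnion]
  intro i hi j hj hij
  simp only [Finset.coe_Icc, Set.mem_Icc] at hi hj
  have key : ∀ i j, 1 ≤ i → i < j → j ≤ r →
      Disjoint (Fset np i (b i)) (Fset np j (b j)) := by
    intro i j h1 h2 h3
    rw [← Finset.disjoint_coe]
    have e1 : (↑(Fset np i (b i)) : Set Vtx) = Sset np i (b i) :=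
      Set.ext (mem_Fset np h1 (h i h1 (by omega)))
    have e2 : (↑(Fset np j (b j)) : Set Vtx) = Sset np j (b j) :=
      Set.ext (mem_Fset np (by omega) (h j (by omega) h3))
    rw [e1, e2]
    have := validseq_ge hb j i h1 (by omega) h3
    exact Sset_disjoint np h1 h2 (by omega) (validseq_lb hb (by omega) h3)
  rcases lt_or_gt_of_ne hij with hlt | hlt
  · exact key i j hi.1 hlt hj.2
  · exact (key j i hj.1 hlt hi.2).symm

theorem replacement_case_two_one'
    (np : ℕ →₀ ℕ)
    (r : ℕ) (b : ℕ → ℕ) (hb : ValidSeq b r)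
    (u : ℕ) (hu1 : 1 ≤ u) (hur : u < r)
    (a : ℕ) (ha : 1 ≤ a) (hba : b u + 2 ≤ a) (hnext : b (u + 1) = a + 1) :
    ValidSeq (fun j => if j = u + 1 then a else b j) r ∧
    ((UChain np (fun j => if j = u + 1 then a else b j) r).ncard : ℤ)
        - ((UChain np b r).ncard : ℤ)
      = ((a : ℤ) - 2 * (u : ℤ)) * ((np a : ℤ) - (np (a + 2) : ℤ)) := by
  have hbu : 2 * u ≤ b u + 1 := validseq_lb hb hu1 (by omega)
  have ha2 : 2 * (u + 1) ≤ a + 1 := by omega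
  have hval : ValidSeq (fun j => if j = u + 1 then a else b j) r := by
    constructor
    · intro j h1 h2
      show 1 ≤ if j = u + 1 then a else b j
      rcases eq_or_ne j (u + 1) with h | h
      · rw [if_pos h]; omega
      · rw [if_neg h]; exact hb.1 j h1 h2
    · intro j h1 h2
      show (if j = u + 1 then a else b j) + 2 ≤ if j + 1 = u + 1 then a else b (j + 1)
      rcases eq_or_ne j (u + 1) with h | h
      · rw [if_pos h, if_neg (show j + 1 ≠ u + 1 by omega)]
        have h3 := hb.2 j h1 h2
        rw [h] at h3
        rw [h]
        omega
      · rw [if_neg h]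
        rcases eq_or_ne (j + 1) (u + 1) with h' | h'
        · rw [if_pos h', show j = u from by omega]
          omega
        · rw [if_neg h']
          exact hb.2 j h1 h2
  refine ⟨hval, ?_⟩
  have hlb : ∀ i, 1 ≤ i → i ≤ r → 2 * i ≤ b i + 1 := fun i h1 h2 => validseq_lb hb h1 h2
  have hlb' : ∀ i, 1 ≤ i → i ≤ r →
      2 * i ≤ (fun j => if j = u + 1 then a else b j) i + 1 := by
    intro i h1 h2
    show 2 * i ≤ (if i = u + 1 then a else b i) + 1
    rcases eq_or_ne i (u + 1) with h | h
    · rw [if_pos h]; omega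
    · rw [if_neg h]; exact hlb i h1 h2
  rw [UChain_ncard np _ r hval hlb', UChain_ncard np b r hb hlb]
  push_cast
  rw [← Finset.sum_sub_distrib]
  rw [Finset.sum_eq_single_of_mem (u + 1) (by rw [Finset.mem_Icc]; omega)]
  · rw [if_pos rfl, hnext, Fset_diff np (by omega : 1 ≤ u + 1) ha2]
    push_cast
    ring
  · intro i _ hi
    rw [if_neg hi]
    ring

/-- Case 2.1 of Proposition 1.13: if `b_u + 2 ≤ a` and `b_{u+1} = a + 1`,
then `b_1, …, b_u, a, b_{u+2}, …, b_r` defines an `r`-`U`-chain and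
`|U_{b_1,…,b_u,a,b_{u+2},…,b_r}| − |U_{b_1,…,b_r}| = (a − 2u)·(n_a − n_{a+2})`. -/
theorem replacement_case_two_one
    (n : ℕ) (hn : 0 < n) (np : ℕ →₀ ℕ) (hP : IsPartitionOf n np)
    (r : ℕ) (b : ℕ → ℕ) (hb : ValidSeq b r)
    (u : ℕ) (hu1 : 1 ≤ u) (hur : u < r)
    (a : ℕ) (ha : 1 ≤ a) (hba : b u + 2 ≤ a) (hnext : b (u + 1) = a + 1) :
    ValidSeq (fun j => if j = u + 1 then a else b j) r ∧
    ((UChain np (fun j => if j = u + 1 then a else b j) r).ncard : ℤ)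
        - ((UChain np b r).ncard : ℤ)
      = ((a : ℤ) - 2 * (u : ℤ)) * ((np a : ℤ) - (np (a + 2) : ℤ)) := by
  exact replacement_case_two_one' np r b hb u hu1 hur a ha hba hnext
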